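/- For any simple graph G with degree sequence d_1,...,d_n and any positive integer k, the trace of the k-th power of the Laplacian matrix satisfies tr(L(G)^k) ≥ Σ_{i=1}^n d_i (d_i + 1)^{k-1}. -/

import Mathlib

open Matrix Polynomial BigOperators

/-- Laplacian matrix of a simple graph over ℝ (classical decidability). -/
noncomputable def lap {V : Type*} [Fintype V] [DecidableEq V] (G : SimpleGraph V) :
    Matrix V V ℝ := by classical exact G.lapMatrix ℝ

/-- `ℓ_k(G) = tr(L(G)^k)`. -/
noncomputable def lapTr {V : Type*} [Fintype V] [DecidableEq V] (G : SimpleGraph V)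
    (k : ℕ) : ℝ := ((lap G) ^ k).trace

/-- Degree of a vertex (classical decidability). -/
noncomputable def deg {V : Type*} [Fintype V] (G : SimpleGraph V) (v : V) : ℕ := by
  classical exact G.degree v

/-- A graph is d-regular when every vertex has degree d. -/
def IsReg {V : Type*} [Fintype V] (G : SimpleGraph V) (d : ℕ) : Prop := ∀ v : V, deg G v = d

/-- The sum Σ_i d_i (d_i+1)^(k-1) over the degree sequence. -/
noncomputable def degSum {V : Type*} [Fintype V] [DecidableEq V] (G : SimpleGraph V)
    (k : ℕ) : ℝ := ∑ i : V, (deg G i : ℝ) * ((deg G i : ℝ) + 1) ^ (k - 1)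

/-- Gap sequence g_k(G) = ℓ_k(G) − Σ_i d_i (d_i+1)^(k-1). -/
noncomputable def gap {V : Type*} [Fintype V] [DecidableEq V] (G : SimpleGraph V)
    (k : ℕ) : ℝ := lapTr G k - degSum G k

section Auxiliary
open Matrix Finset


/-- Weighted Jensen inequality for powers. -/
lemma jensen_pow {ι : Type*} (s : Finset ι) (w x : ι → ℝ) (m : ℕ) (hm : 1 ≤ m)
    (hw : ∀ i ∈ s, 0 ≤ w i) (hx : ∀ i ∈ s, 0 ≤ x i) :
    (∑ i ∈ s, w i * x i) ^ m ≤ (∑ i ∈ s, w i * x i ^ m) * (∑ i ∈ s, w i) ^ (m - 1) := by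
  set S := ∑ i ∈ s, w i with hS
  rcases eq_or_lt_of_le (Finset.sum_nonneg hw) with h0 | hpos
  · have hz : ∀ i ∈ s, w i = 0 := fun i hi =>
      (Finset.sum_eq_zero_iff_of_nonneg hw).mp h0.symm i hi
    have h1 : ∑ i ∈ s, w i * x i = 0 :=
      Finset.sum_eq_zero (fun i hi => by rw [hz i hi, zero_mul])
    have h2 : ∑ i ∈ s, w i * x i ^ m = 0 :=
      Finset.sum_eq_zero (fun i hi => by rw [hz i hi, zero_mul])
    rw [h1, h2, zero_pow (by omega), zero_mul]
  · have hSne : S ≠ 0 := ne_of_gt hpos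
    have key := (convexOn_pow (𝕜 := ℝ) m).map_sum_le (t := s) (w := fun i => w i / S)
      (p := x) (fun i hi => div_nonneg (hw i hi) hpos.le)
      (by rw [← Finset.sum_div, ← hS, div_self hSne])
      (fun i hi => hx i hi)
    simp only [smul_eq_mul] at key
    have hsum : ∑ i ∈ s, w i / S * x i = (∑ i ∈ s, w i * x i) / S := by
      rw [Finset.sum_div]; exact Finset.sum_congr rfl fun i _ => by ring
    have hsum2 : ∑ i ∈ s, w i / S * x i ^ m = (∑ i ∈ s, w i * x i ^ m) / S := by
      rw [Finset.sum_div]; exact Finset.sum_congr rfl fun i _ => by ring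
    rw [hsum, hsum2] at key
    obtain ⟨m', rfl⟩ : ∃ m', m = m' + 1 := ⟨m - 1, (Nat.succ_pred_eq_of_pos hm).symm⟩
    have := mul_le_mul_of_nonneg_right key (pow_nonneg hpos.le (m' + 1))
    calc (∑ i ∈ s, w i * x i) ^ (m' + 1)
        = ((∑ i ∈ s, w i * x i) / S) ^ (m' + 1) * S ^ (m' + 1) := by
          rw [div_pow, div_mul_cancel₀ _ (pow_ne_zero _ hSne)]
      _ ≤ (∑ i ∈ s, w i * x i ^ (m' + 1)) / S * S ^ (m' + 1) := this
      _ = (∑ i ∈ s, w i * x i ^ (m' + 1)) * S ^ (m' + 1 - 1) := by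
          simp only [Nat.add_sub_cancel]
          rw [pow_succ']
          field_simp

/-- Conjugation by a unitary commutes with powers. -/
lemma unitary_conj_pow {n : ℕ} (U D A : Matrix (Fin n) (Fin n) ℝ)
    (hU : U * star U = 1) (hU' : star U * U = 1) (h : A = U * D * star U) (m : ℕ) :
    A ^ m = U * D ^ m * star U := by
  induction m with
  | zero => simp [hU]
  | succ m ih =>
    rw [pow_succ, ih, h, pow_succ,
      show U * D ^ m * star U * (U * D * star U) = U * (D ^ m * (star U * U) * D) * star U by
        noncomm_ring, hU', mul_one]

/-- Diagonal entries of powers of a hermitian real matrix via spectral data. -/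
lemma diag_pow_eq {n : ℕ} {A : Matrix (Fin n) (Fin n) ℝ} (hA : A.IsHermitian) (m : ℕ) (i : Fin n) :
    (A ^ m) i i = ∑ j, ((hA.eigenvectorUnitary : Matrix (Fin n) (Fin n) ℝ) i j) ^ 2
      * hA.eigenvalues j ^ m := by
  have hU : (hA.eigenvectorUnitary : Matrix (Fin n) (Fin n) ℝ)
      * star (hA.eigenvectorUnitary : Matrix (Fin n) (Fin n) ℝ) = 1 :=
    Matrix.mem_unitaryGroup_iff.mp hA.eigenvectorUnitary.2
  have hU' : star (hA.eigenvectorUnitary : Matrix (Fin n) (Fin n) ℝ)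
      * (hA.eigenvectorUnitary : Matrix (Fin n) (Fin n) ℝ) = 1 :=
    Matrix.mem_unitaryGroup_iff'.mp hA.eigenvectorUnitary.2
  have hspec : A = (hA.eigenvectorUnitary : Matrix (Fin n) (Fin n) ℝ)
      * diagonal hA.eigenvalues * star (hA.eigenvectorUnitary : Matrix (Fin n) (Fin n) ℝ) := by
    have := hA.spectral_theorem
    simpa [RCLike.ofReal_real_eq_id] using this
  rw [unitary_conj_pow _ _ _ hU hU' hspec m, Matrix.diagonal_pow]
  rw [Matrix.mul_apply]
  refine Finset.sum_congr rfl fun j _ => ?_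
  rw [Matrix.mul_diagonal]
  simp only [Matrix.star_apply, star_trivial, Pi.pow_apply]
  ring


/-- Per-vertex bound: the i-th diagonal entry of L^k is at least d_i (d_i+1)^(k-1). -/
lemma key_vertex {n : ℕ} (G : SimpleGraph (Fin n)) [DecidableRel G.Adj] (k : ℕ) (hk : 1 ≤ k)
    (i : Fin n) :
    (G.degree i : ℝ) * ((G.degree i : ℝ) + 1) ^ (k - 1) ≤ ((G.lapMatrix ℝ) ^ k) i i := by
  have hP := G.posSemidef_lapMatrix ℝ
  have hH := hP.1
  set d : ℝ := (G.degree i : ℝ) with hd_def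
  set c : Fin n → ℝ := fun j => ((hH.eigenvectorUnitary : Matrix (Fin n) (Fin n) ℝ) i j) ^ 2
    with hc_def
  set lam : Fin n → ℝ := hH.eigenvalues with hlam_def
  have hc : ∀ j, 0 ≤ c j := fun j => sq_nonneg _
  have hlam : ∀ j, 0 ≤ lam j := hP.eigenvalues_nonneg
  have hdiag : ∀ m : ℕ, ((G.lapMatrix ℝ) ^ m) i i = ∑ j, c j * lam j ^ m :=
    fun m => diag_pow_eq hH m i
  have hL1 : G.lapMatrix ℝ i i = d := by
    simp [SimpleGraph.lapMatrix, SimpleGraph.degMatrix, Matrix.sub_apply, hd_def]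
  have h1 : ∑ j, c j * lam j = d := by
    have := hdiag 1
    rw [pow_one, hL1] at this
    simpa [pow_one] using this.symm
  have hL2 : ((G.lapMatrix ℝ) ^ 2) i i = d ^ 2 + d := by
    rw [pow_two, SimpleGraph.lapMatrix, sub_mul, mul_sub, mul_sub]
    simp only [Matrix.sub_apply]
    have hAA := G.adjMatrix_mul_self_apply_self (α := ℝ) i
    have hDD : (G.degMatrix ℝ * G.degMatrix ℝ) i i = d ^ 2 := by
      simp [SimpleGraph.degMatrix, Matrix.diagonal_mul_diagonal, pow_two, hd_def]
    have hDA : (G.degMatrix ℝ * G.adjMatrix ℝ) i i = 0 := by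
      rw [SimpleGraph.degMatrix, Matrix.diagonal_mul]; simp
    have hAD : (G.adjMatrix ℝ * G.degMatrix ℝ) i i = 0 := by
      rw [SimpleGraph.degMatrix, Matrix.mul_diagonal]; simp
    rw [hAA, hDD, hDA, hAD]
    ring
  have h2 : ∑ j, c j * lam j ^ 2 = d ^ 2 + d := by rw [← hdiag 2, hL2]
  rcases eq_or_lt_of_le hk with h1k | h2k
  · -- k = 1
    rw [← h1k]
    simp only [Nat.sub_self, pow_zero, mul_one, pow_one, hL1]
    exact le_refl d
  · -- k ≥ 2
    have hk2 : 2 ≤ k := h2k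
    by_cases hd0 : G.degree i = 0
    · have hd' : d = 0 := by rw [hd_def, hd0]; norm_num
      rw [hd', zero_mul, hdiag k]
      exact Finset.sum_nonneg fun j _ => mul_nonneg (hc j) (pow_nonneg (hlam j) k)
    · have hdpos : (0 : ℝ) < d := by
        rw [hd_def]
        exact_mod_cast Nat.pos_of_ne_zero hd0
      have hjen := jensen_pow Finset.univ (fun j => c j * lam j) lam (k - 1) (by omega)
        (fun j _ => mul_nonneg (hc j) (hlam j)) (fun j _ => hlam j)
      have e1 : ∑ j, (c j * lam j) * lam j = d ^ 2 + d := by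
        rw [← h2]; exact Finset.sum_congr rfl fun j _ => by ring
      have e2 : ∑ j, (c j * lam j) * lam j ^ (k - 1) = ∑ j, c j * lam j ^ k := by
        refine Finset.sum_congr rfl fun j _ => ?_
        rw [mul_assoc, ← pow_succ']
        congr 2
        omega
      rw [e1, e2, h1, ← hdiag k] at hjen
      have hexp : (d ^ 2 + d) ^ (k - 1) = (d * (d + 1) ^ (k - 1)) * d ^ (k - 1 - 1) := by
        have h' : d ^ 2 + d = d * (d + 1) := by ring
        have h'' : d ^ (k - 1) = d ^ (k - 1 - 1) * d := by
          rw [← pow_succ]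
          congr 1
          omega
        rw [h', mul_pow, h'']
        ring
      rw [hexp] at hjen
      exact le_of_mul_le_mul_right hjen (pow_pos hdpos _)
end Auxiliary

/-- tr(L(G)^k) ≥ Σ_i d_i (d_i+1)^(k-1) for every positive integer k. -/
theorem stmt2 (n k : ℕ) (hk : 1 ≤ k) (G : SimpleGraph (Fin n)) :
    degSum G k ≤ lapTr G k := by
  classical
  unfold degSum lapTr lap deg
  rw [Matrix.trace]
  refine Finset.sum_le_sum fun i _ => ?_
  exact key_vertex G k hk i
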